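/- Suppose an orbit of the multiplicative symmetric QRT map u_{n+1}u_{n-1} = (a₃u_n² + a₅u_n + a₆)/(a₁u_n² + a₂u_n + a₃) starting at (u₀, u₁) has invariant value I = -a₄, where I is as defined above. Then the same sequence (u_n) satisfies the additive QRT map u_{n+1} + u_{n-1} = -(a₂u_n² + a₄u_n + a₅)/(a₁u_n² + a₂u_n + a₃), and its additive invariant J = a₁u₀²u₁² + a₂u₀u₁(u₀+u₁) + a₃(u₀²+u₁²) + a₄u₀u₁ + a₅(u₀+u₁) takes the value J = -a₆. -/

import Mathlib

theorem stmt_14 {K : Type*} [Field K] (a₁ a₂ a₃ a₄ a₅ a₆ : K) (u : ℤ → K)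
    (hune : ∀ n : ℤ, u n ≠ 0)
    (hden : ∀ n : ℤ, a₁ * u n ^ 2 + a₂ * u n + a₃ ≠ 0)
    (hmul : ∀ n : ℤ, u (n + 1) * u (n - 1) =
      (a₃ * u n ^ 2 + a₅ * u n + a₆) / (a₁ * u n ^ 2 + a₂ * u n + a₃))
    (hI : (a₁ * u 0 ^ 2 * u 1 ^ 2 + a₂ * u 0 * u 1 * (u 0 + u 1) + a₃ * (u 0 ^ 2 + u 1 ^ 2) +
      a₅ * (u 0 + u 1) + a₆) / (u 0 * u 1) = -a₄) :
    (∀ n : ℤ, u (n + 1) + u (n - 1) =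
      -((a₂ * u n ^ 2 + a₄ * u n + a₅) / (a₁ * u n ^ 2 + a₂ * u n + a₃))) ∧
    a₁ * u 0 ^ 2 * u 1 ^ 2 + a₂ * u 0 * u 1 * (u 0 + u 1) + a₃ * (u 0 ^ 2 + u 1 ^ 2) +
      a₄ * u 0 * u 1 + a₅ * (u 0 + u 1) = -a₆ := by
  set Qf : K → K → K := fun x y =>
    a₁ * x ^ 2 * y ^ 2 + a₂ * x * y * (x + y) + a₃ * (x ^ 2 + y ^ 2) + a₄ * x * y +
      a₅ * (x + y) + a₆ with hQf
  -- cleared form of the multiplicative recurrence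
  have hrel : ∀ n : ℤ, u (n + 1) * u (n - 1) * (a₁ * u n ^ 2 + a₂ * u n + a₃) =
      a₃ * u n ^ 2 + a₅ * u n + a₆ := by
    intro n
    have h := hmul n
    rw [eq_div_iff (hden n)] at h
    exact h
  -- base case
  have hQ0 : Qf (u 0) (u 1) = 0 := by
    rw [div_eq_iff (mul_ne_zero (hune 0) (hune 1))] at hI
    simp only [hQf]
    linear_combination hI
  -- conservation step
  have hstep : ∀ n : ℤ, u (n + 1) * Qf (u (n - 1)) (u n) = u (n - 1) * Qf (u n) (u (n + 1)) := by
    intro n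
    simp only [hQf]
    linear_combination (u (n - 1) - u (n + 1)) * hrel n
  have hfwd : ∀ n : ℤ, Qf (u n) (u (n + 1)) = 0 → Qf (u (n + 1)) (u (n + 2)) = 0 := by
    intro n h
    have h2 := hstep (n + 1)
    rw [show n + 1 - 1 = n by ring, show n + 1 + 1 = n + 2 by ring] at h2
    rw [h, mul_zero] at h2
    rcases mul_eq_zero.mp h2.symm with h3 | h3
    · exact absurd h3 (hune n)
    · exact h3
  have hbwd : ∀ n : ℤ, Qf (u n) (u (n + 1)) = 0 → Qf (u (n - 1)) (u n) = 0 := by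
    intro n h
    have h2 := hstep n
    rw [h, mul_zero] at h2
    rcases mul_eq_zero.mp h2 with h3 | h3
    · exact absurd h3 (hune (n + 1))
    · exact h3
  -- the invariant vanishes everywhere
  have hall : ∀ n : ℤ, Qf (u n) (u (n + 1)) = 0 := by
    intro n
    induction n using Int.induction_on with
    | zero => exact hQ0
    | succ k ih => exact hfwd k ih
    | pred k ih =>
      rw [show (-(k : ℤ)) - 1 + 1 = -k by ring]
      exact hbwd (-k) ih
  constructor
  · intro n
    have hQ' : Qf (u (n - 1)) (u n) = 0 := by
      have := hall (n - 1)
      rwa [show n - 1 + 1 = n by ring] at this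
    simp only [hQf] at hQ'
    rw [← neg_div, eq_div_iff (hden n)]
    have key : u (n - 1) * ((a₁ * u n ^ 2 + a₂ * u n + a₃) * (u (n - 1) + u (n + 1)) +
        (a₂ * u n ^ 2 + a₄ * u n + a₅)) = 0 := by
      linear_combination hQ' + hrel n
    rcases mul_eq_zero.mp key with h3 | h3
    · exact absurd h3 (hune (n - 1))
    · linear_combination h3
  · have := hQ0
    simp only [hQf] at this
    linear_combination this
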